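/- Let (A₁, B₁, C₁, D₁) and (A₂, B₂, C₂, D₂) be stable unitary realizations with state dimensions n₁ and n₂ respectively and with the same input/output dimension m. Suppose they realize the same function near the origin, i.e. D₁ = D₂ and C₁ A₁^k B₁ = C₂ A₂^k B₂ for every integer k ≥ 0. Then n₁ = n₂ and the two realizations are unitarily equivalent: there exists a unitary n₁×n₂ matrix U such that A₁ U = U A₂, B₁ = U B₂ and C₁ U = C₂. -/

import Mathlib

open Matrix Filter Topology
open scoped Matrix.Norms.L2Operator NNReal ENNReal

lemma aux_pow_bound {n : ℕ} (A : Matrix (Fin n) (Fin n) ℂ)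
    (hs : ∀ μ ∈ spectrum ℂ A, ‖μ‖ < 1) :
    ∃ r : ℝ, 0 ≤ r ∧ r < 1 ∧ ∀ᶠ k in atTop, ‖A ^ k‖ ≤ r ^ k := by
  rcases Nat.eq_zero_or_pos n with hn | hn
  · refine ⟨1/2, by norm_num, by norm_num, Eventually.of_forall fun k => ?_⟩
    subst hn
    haveI : Subsingleton (Matrix (Fin 0) (Fin 0) ℂ) := by
      constructor; intro a b; ext i; exact absurd i.2 (by omega)
    rw [Subsingleton.elim (A ^ k) 0, norm_zero]
    positivity
  · haveI : NeZero n := ⟨hn.ne'⟩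
    have hsr : spectralRadius ℂ A < 1 := by
      have := spectrum.spectralRadius_lt_of_forall_lt A (r := 1) (fun z hz => by
        have := hs z hz; exact_mod_cast this)
      simpa using this
    obtain ⟨r, hr1, hr2⟩ := ENNReal.lt_iff_exists_nnreal_btwn.mp hsr
    have hG := spectrum.pow_nnnorm_pow_one_div_tendsto_nhds_spectralRadius A
    have hev : ∀ᶠ k : ℕ in atTop, (‖A ^ k‖₊ : ℝ≥0∞) ^ (1 / (k:ℝ)) < (r : ℝ≥0∞) :=
      hG.eventually_lt_const hr1
    refine ⟨r, r.coe_nonneg, by exact_mod_cast hr2, ?_⟩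
    filter_upwards [hev, eventually_ge_atTop 1] with k hk hk1
    have hk0 : (k:ℝ) ≠ 0 := by positivity
    have : ((‖A ^ k‖₊ : ℝ≥0∞) ^ (1 / (k:ℝ))) ^ (k:ℝ) < (r : ℝ≥0∞) ^ (k:ℝ) :=
      ENNReal.rpow_lt_rpow hk (by positivity)
    rw [← ENNReal.rpow_mul, one_div_mul_cancel hk0, ENNReal.rpow_one] at this
    have h2 : (‖A ^ k‖₊ : ℝ≥0∞) < ((r ^ k : ℝ≥0) : ℝ≥0∞) := by
      rwa [ENNReal.coe_pow, ← ENNReal.rpow_natCast (r : ℝ≥0∞) k]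
    have h3 : ‖A ^ k‖₊ < r ^ k := by exact_mod_cast h2
    exact_mod_cast h3.le

lemma aux_summable_cross {n₁ n₂ : ℕ}
    (A₁ : Matrix (Fin n₁) (Fin n₁) ℂ) (A₂ : Matrix (Fin n₂) (Fin n₂) ℂ)
    (X : Matrix (Fin n₁) (Fin n₂) ℂ)
    (h₁ : ∀ μ ∈ spectrum ℂ A₁, ‖μ‖ < 1) (h₂ : ∀ μ ∈ spectrum ℂ A₂, ‖μ‖ < 1) :
    Summable (fun k : ℕ => A₁ ^ k * X * A₂ᴴ ^ k) := by
  obtain ⟨r₁, hr₁0, hr₁1, hev₁⟩ := aux_pow_bound A₁ h₁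
  obtain ⟨r₂, hr₂0, hr₂1, hev₂⟩ := aux_pow_bound A₂ h₂
  have hgeom : Summable (fun k : ℕ => ‖X‖ * (r₁ * r₂) ^ k) :=
    (summable_geometric_of_lt_one (by positivity) (by nlinarith)).mul_left _
  refine Summable.of_norm_bounded_eventually_nat hgeom ?_
  filter_upwards [hev₁, hev₂] with k hk₁ hk₂
  have e1 : ‖A₁ ^ k * X * A₂ᴴ ^ k‖ ≤ ‖A₁ ^ k * X‖ * ‖A₂ᴴ ^ k‖ := Matrix.l2_opNorm_mul _ _
  have e2 : ‖A₁ ^ k * X‖ ≤ ‖A₁ ^ k‖ * ‖X‖ := Matrix.l2_opNorm_mul _ _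
  have e3 : ‖A₂ᴴ ^ k‖ = ‖A₂ ^ k‖ := by
    rw [← Matrix.conjTranspose_pow, Matrix.l2_opNorm_conjTranspose]
  calc ‖A₁ ^ k * X * A₂ᴴ ^ k‖ ≤ ‖A₁ ^ k * X‖ * ‖A₂ᴴ ^ k‖ := e1
    _ ≤ (‖A₁ ^ k‖ * ‖X‖) * ‖A₂ ^ k‖ := by
        rw [e3]; exact mul_le_mul_of_nonneg_right e2 (norm_nonneg _)
    _ ≤ (r₁ ^ k * ‖X‖) * r₂ ^ k := by
        apply mul_le_mul (mul_le_mul_of_nonneg_right hk₁ (norm_nonneg _)) hk₂ (norm_nonneg _)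
        positivity
    _ = ‖X‖ * (r₁ * r₂) ^ k := by ring

lemma aux_cont_mulLeft {p n q : ℕ} (M : Matrix (Fin p) (Fin n) ℂ) :
    Continuous (fun X : Matrix (Fin n) (Fin q) ℂ => M * X) := by
  apply (LipschitzWith.of_dist_le_mul (K := ‖M‖₊) ?_).continuous
  intro X Y
  rw [dist_eq_norm, dist_eq_norm, ← Matrix.mul_sub]
  exact (Matrix.l2_opNorm_mul M (X - Y)).trans (by rw [coe_nnnorm])

lemma aux_cont_mulRight {p n q : ℕ} (M : Matrix (Fin n) (Fin q) ℂ) :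
    Continuous (fun X : Matrix (Fin p) (Fin n) ℂ => X * M) := by
  apply (LipschitzWith.of_dist_le_mul (K := ‖M‖₊) ?_).continuous
  intro X Y
  rw [dist_eq_norm, dist_eq_norm, ← Matrix.sub_mul]
  calc ‖(X - Y) * M‖ ≤ ‖X - Y‖ * ‖M‖ := Matrix.l2_opNorm_mul _ M
    _ = ‖M‖ * ‖X - Y‖ := mul_comm _ _
    _ = ↑‖M‖₊ * ‖X - Y‖ := by rw [coe_nnnorm]

lemma aux_hasSum_mulLeft {p n q : ℕ} {f : ℕ → Matrix (Fin n) (Fin q) ℂ}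
    {S : Matrix (Fin n) (Fin q) ℂ} (hf : HasSum f S) (M : Matrix (Fin p) (Fin n) ℂ) :
    HasSum (fun k => M * f k) (M * S) :=
  hf.map (AddMonoidHom.mk' (fun X => M * X) (fun a b => Matrix.mul_add M a b))
    (aux_cont_mulLeft M)

lemma aux_hasSum_mulRight {p n q : ℕ} {f : ℕ → Matrix (Fin p) (Fin n) ℂ}
    {S : Matrix (Fin p) (Fin n) ℂ} (hf : HasSum f S) (M : Matrix (Fin n) (Fin q) ℂ) :
    HasSum (fun k => f k * M) (S * M) :=
  hf.map (AddMonoidHom.mk' (fun X => X * M) (fun a b => Matrix.add_mul a b M))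
    (aux_cont_mulRight M)

lemma aux_hasSum_conjTranspose {p q : ℕ} {f : ℕ → Matrix (Fin p) (Fin q) ℂ}
    {S : Matrix (Fin p) (Fin q) ℂ} (hf : HasSum f S) :
    HasSum (fun k => (f k)ᴴ) Sᴴ := by
  refine hf.map (AddMonoidHom.mk' (fun X => Xᴴ) (fun a b => Matrix.conjTranspose_add a b)) ?_
  apply Isometry.continuous
  intro X Y
  simp only [AddMonoidHom.mk'_apply]
  rw [edist_dist, edist_dist, dist_eq_norm, dist_eq_norm, ← Matrix.conjTranspose_sub,
    Matrix.l2_opNorm_conjTranspose]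

lemma aux_hasSum_gramian {n m : ℕ}
    (A : Matrix (Fin n) (Fin n) ℂ) (B : Matrix (Fin n) (Fin m) ℂ)
    (hAB : A * Aᴴ + B * Bᴴ = 1)
    (hs : ∀ μ ∈ spectrum ℂ A, ‖μ‖ < 1) :
    HasSum (fun k : ℕ => A ^ k * (B * Bᴴ) * Aᴴ ^ k) 1 := by
  have hsum : Summable (fun k : ℕ => A ^ k * (B * Bᴴ) * Aᴴ ^ k) :=
    aux_summable_cross A A (B * Bᴴ) hs hs
  have hpartial : ∀ N : ℕ,
      ∑ k ∈ Finset.range N, A ^ k * (B * Bᴴ) * Aᴴ ^ k = 1 - A ^ N * Aᴴ ^ N := by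
    intro N
    induction N with
    | zero => simp
    | succ N ih =>
      rw [Finset.sum_range_succ, ih]
      have h1 : A ^ (N+1) * Aᴴ ^ (N+1) = A ^ N * (A * Aᴴ) * Aᴴ ^ N := by
        rw [pow_succ, pow_succ']; noncomm_ring
      rw [h1]
      have h2 : A * Aᴴ = 1 - B * Bᴴ := by rw [← hAB]; noncomm_ring
      rw [h2]
      noncomm_ring
  -- the tail tends to zero
  obtain ⟨r, hr0, hr1, hev⟩ := aux_pow_bound A hs
  have htail : Tendsto (fun N : ℕ => A ^ N * Aᴴ ^ N) atTop (𝓝 0) := by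
    have hg : Tendsto (fun N : ℕ => r ^ N * r ^ N) atTop (𝓝 0) := by
      have := (tendsto_pow_atTop_nhds_zero_of_lt_one hr0 hr1)
      simpa using this.mul this
    refine squeeze_zero_norm' ?_ hg
    filter_upwards [hev] with N hN
    calc ‖A ^ N * Aᴴ ^ N‖ ≤ ‖A ^ N‖ * ‖Aᴴ ^ N‖ := Matrix.l2_opNorm_mul _ _
      _ = ‖A ^ N‖ * ‖A ^ N‖ := by
          rw [← Matrix.conjTranspose_pow, Matrix.l2_opNorm_conjTranspose]
      _ ≤ r ^ N * r ^ N := mul_le_mul hN hN (norm_nonneg _) (by positivity)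
  have hlim : Tendsto (fun N : ℕ => ∑ k ∈ Finset.range N, A ^ k * (B * Bᴴ) * Aᴴ ^ k)
      atTop (𝓝 1) := by
    simp only [hpartial]
    simpa using (tendsto_const_nhds (x := (1 : Matrix (Fin n) (Fin n) ℂ))).sub htail
  have h := hsum.hasSum
  have h2 := h.tendsto_sum_nat
  have : ∑' k, A ^ k * (B * Bᴴ) * Aᴴ ^ k = 1 := tendsto_nhds_unique h2 hlim
  rwa [this] at h

lemma aux_ext_of_gramian {n m p : ℕ}
    (A : Matrix (Fin n) (Fin n) ℂ) (B : Matrix (Fin n) (Fin m) ℂ)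
    (hG : HasSum (fun k : ℕ => A ^ k * (B * Bᴴ) * Aᴴ ^ k) 1)
    (X Y : Matrix (Fin p) (Fin n) ℂ)
    (h : ∀ k : ℕ, X * (A ^ k * B) = Y * (A ^ k * B)) : X = Y := by
  have hX := aux_hasSum_mulLeft hG X
  have hY := aux_hasSum_mulLeft hG Y
  have hfe : (fun k : ℕ => X * (A ^ k * (B * Bᴴ) * Aᴴ ^ k))
      = (fun k : ℕ => Y * (A ^ k * (B * Bᴴ) * Aᴴ ^ k)) := by
    funext k
    have e1 : X * (A ^ k * (B * Bᴴ) * Aᴴ ^ k) = X * (A ^ k * B) * (Bᴴ * Aᴴ ^ k) := by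
      simp only [Matrix.mul_assoc]
    have e2 : Y * (A ^ k * (B * Bᴴ) * Aᴴ ^ k) = Y * (A ^ k * B) * (Bᴴ * Aᴴ ^ k) := by
      simp only [Matrix.mul_assoc]
    rw [e1, e2, h k]
  rw [hfe] at hX
  have := hX.unique hY
  simpa only [Matrix.mul_one] using this

-- cross moment identities for a single system

lemma aux_f00 {n m : ℕ} (A : Matrix (Fin n) (Fin n) ℂ) (B : Matrix (Fin n) (Fin m) ℂ)
    (D : Matrix (Fin m) (Fin m) ℂ) (hBB : Bᴴ * B + Dᴴ * D = 1) :
    Bᴴ * Aᴴ ^ 0 * A ^ 0 * B = 1 - Dᴴ * D := by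
  simpa [pow_zero, Matrix.mul_one] using eq_sub_of_add_eq hBB

lemma aux_f0j {n m : ℕ} (A : Matrix (Fin n) (Fin n) ℂ) (B : Matrix (Fin n) (Fin m) ℂ)
    (C : Matrix (Fin m) (Fin n) ℂ) (D : Matrix (Fin m) (Fin m) ℂ)
    (hcol2 : Aᴴ * B + Cᴴ * D = 0) (j : ℕ) :
    Bᴴ * Aᴴ ^ 0 * A ^ (j + 1) * B = -(Dᴴ * (C * A ^ j * B)) := by
  have hBA : Bᴴ * A = -(Dᴴ * C) := by
    have h := congrArg Matrix.conjTranspose hcol2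
    simp only [Matrix.conjTranspose_add, Matrix.conjTranspose_mul,
      Matrix.conjTranspose_conjTranspose, Matrix.conjTranspose_zero] at h
    linear_combination (norm := noncomm_ring) h
  calc Bᴴ * Aᴴ ^ 0 * A ^ (j + 1) * B = (Bᴴ * A) * (A ^ j * B) := by
        rw [pow_zero, Matrix.mul_one, pow_succ']
        simp only [Matrix.mul_assoc]
    _ = -(Dᴴ * (C * A ^ j * B)) := by
        rw [hBA]
        simp only [Matrix.neg_mul, Matrix.mul_assoc]

lemma aux_fk0 {n m : ℕ} (A : Matrix (Fin n) (Fin n) ℂ) (B : Matrix (Fin n) (Fin m) ℂ)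
    (C : Matrix (Fin m) (Fin n) ℂ) (D : Matrix (Fin m) (Fin m) ℂ)
    (hcol2 : Aᴴ * B + Cᴴ * D = 0) (k : ℕ) :
    Bᴴ * Aᴴ ^ (k + 1) * A ^ 0 * B = -((C * A ^ k * B)ᴴ * D) := by
  have hAB : Aᴴ * B = -(Cᴴ * D) := eq_neg_of_add_eq_zero_left hcol2
  calc Bᴴ * Aᴴ ^ (k + 1) * A ^ 0 * B = Bᴴ * (Aᴴ ^ k * (Aᴴ * B)) := by
        rw [pow_zero, Matrix.mul_one, pow_succ]
        simp only [Matrix.mul_assoc]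
    _ = -((C * A ^ k * B)ᴴ * D) := by
        rw [hAB]
        simp only [Matrix.conjTranspose_mul, Matrix.conjTranspose_pow, Matrix.mul_neg,
          Matrix.mul_assoc, Matrix.neg_mul]

lemma aux_fkj {n m : ℕ} (A : Matrix (Fin n) (Fin n) ℂ) (B : Matrix (Fin n) (Fin m) ℂ)
    (C : Matrix (Fin m) (Fin n) ℂ)
    (hcol1 : Aᴴ * A + Cᴴ * C = 1) (k j : ℕ) :
    Bᴴ * Aᴴ ^ (k + 1) * A ^ (j + 1) * B
      = Bᴴ * Aᴴ ^ k * A ^ j * B - (C * A ^ k * B)ᴴ * (C * A ^ j * B) := by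
  have hAAe : Aᴴ * A = 1 - Cᴴ * C := eq_sub_of_add_eq hcol1
  calc Bᴴ * Aᴴ ^ (k + 1) * A ^ (j + 1) * B
      = Bᴴ * Aᴴ ^ k * ((Aᴴ * A) * (A ^ j * B)) := by
        rw [pow_succ, pow_succ']
        simp only [Matrix.mul_assoc]
    _ = Bᴴ * Aᴴ ^ k * ((1 - Cᴴ * C) * (A ^ j * B)) := by rw [hAAe]
    _ = Bᴴ * Aᴴ ^ k * A ^ j * B - (C * A ^ k * B)ᴴ * (C * A ^ j * B) := by
        simp only [Matrix.sub_mul, Matrix.mul_sub, Matrix.one_mul,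
          Matrix.conjTranspose_mul, Matrix.conjTranspose_pow, Matrix.mul_assoc]

/-- Two stable unitary realizations of the same function are unitarily
equivalent: if `D₁ = D₂` and `C₁ A₁ᵏ B₁ = C₂ A₂ᵏ B₂` for all `k ≥ 0`, then the
state dimensions agree and there is a unitary `U` with `A₁ U = U A₂`, `B₁ = U B₂`
and `C₁ U = C₂`. -/
theorem stmt_13 {n₁ n₂ m : ℕ}
    (A₁ : Matrix (Fin n₁) (Fin n₁) ℂ) (B₁ : Matrix (Fin n₁) (Fin m) ℂ)
    (C₁ : Matrix (Fin m) (Fin n₁) ℂ) (D₁ : Matrix (Fin m) (Fin m) ℂ)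
    (A₂ : Matrix (Fin n₂) (Fin n₂) ℂ) (B₂ : Matrix (Fin n₂) (Fin m) ℂ)
    (C₂ : Matrix (Fin m) (Fin n₂) ℂ) (D₂ : Matrix (Fin m) (Fin m) ℂ)
    (h₁_unitary : fromBlocks A₁ B₁ C₁ D₁ ∈ Matrix.unitaryGroup (Fin n₁ ⊕ Fin m) ℂ)
    (h₁_stable : ∀ μ ∈ spectrum ℂ A₁, ‖μ‖ < 1)
    (h₂_unitary : fromBlocks A₂ B₂ C₂ D₂ ∈ Matrix.unitaryGroup (Fin n₂ ⊕ Fin m) ℂ)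
    (h₂_stable : ∀ μ ∈ spectrum ℂ A₂, ‖μ‖ < 1)
    (hD : D₁ = D₂)
    (hCAB : ∀ k : ℕ, C₁ * A₁ ^ k * B₁ = C₂ * A₂ ^ k * B₂) :
    n₁ = n₂ ∧
      ∃ U : Matrix (Fin n₁) (Fin n₂) ℂ,
        Uᴴ * U = 1 ∧ U * Uᴴ = 1 ∧
        A₁ * U = U * A₂ ∧ B₁ = U * B₂ ∧ C₁ * U = C₂ := by
  -- block relations
  have hrow₁ : fromBlocks A₁ B₁ C₁ D₁ * (fromBlocks A₁ B₁ C₁ D₁)ᴴ = 1 := by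
    rw [← Matrix.star_eq_conjTranspose]; exact Matrix.mem_unitaryGroup_iff.mp h₁_unitary
  have hcol₁ : (fromBlocks A₁ B₁ C₁ D₁)ᴴ * fromBlocks A₁ B₁ C₁ D₁ = 1 := by
    rw [← Matrix.star_eq_conjTranspose]; exact Matrix.mem_unitaryGroup_iff'.mp h₁_unitary
  have hrow₂ : fromBlocks A₂ B₂ C₂ D₂ * (fromBlocks A₂ B₂ C₂ D₂)ᴴ = 1 := by
    rw [← Matrix.star_eq_conjTranspose]; exact Matrix.mem_unitaryGroup_iff.mp h₂_unitary
  have hcol₂ : (fromBlocks A₂ B₂ C₂ D₂)ᴴ * fromBlocks A₂ B₂ C₂ D₂ = 1 := by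
    rw [← Matrix.star_eq_conjTranspose]; exact Matrix.mem_unitaryGroup_iff'.mp h₂_unitary
  rw [Matrix.fromBlocks_conjTranspose, Matrix.fromBlocks_multiply, ← Matrix.fromBlocks_one,
    Matrix.fromBlocks_inj] at hrow₁ hcol₁ hrow₂ hcol₂
  obtain ⟨hAB₁, -, -, -⟩ := hrow₁
  obtain ⟨hc1₁, hc2₁, -, hBB₁⟩ := hcol₁
  obtain ⟨hAB₂, -, -, -⟩ := hrow₂
  obtain ⟨hc1₂, hc2₂, -, hBB₂⟩ := hcol₂
  -- the moment matching
  have key : ∀ k j : ℕ, B₁ᴴ * A₁ᴴ ^ k * A₁ ^ j * B₁ = B₂ᴴ * A₂ᴴ ^ k * A₂ ^ j * B₂ := by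
    intro k
    induction k with
    | zero =>
      intro j
      cases j with
      | zero => rw [aux_f00 A₁ B₁ D₁ hBB₁, aux_f00 A₂ B₂ D₂ hBB₂, hD]
      | succ j => rw [aux_f0j A₁ B₁ C₁ D₁ hc2₁ j, aux_f0j A₂ B₂ C₂ D₂ hc2₂ j, hD, hCAB j]
    | succ k ih =>
      intro j
      cases j with
      | zero => rw [aux_fk0 A₁ B₁ C₁ D₁ hc2₁ k, aux_fk0 A₂ B₂ C₂ D₂ hc2₂ k, hD, hCAB k]
      | succ j =>
        rw [aux_fkj A₁ B₁ C₁ hc1₁ k j, aux_fkj A₂ B₂ C₂ hc1₂ k j, ih j, hCAB k, hCAB j]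
  -- the Gramians
  have hW₁ : HasSum (fun k : ℕ => A₁ ^ k * (B₁ * B₁ᴴ) * A₁ᴴ ^ k) 1 :=
    aux_hasSum_gramian A₁ B₁ hAB₁ h₁_stable
  have hW₂ : HasSum (fun k : ℕ => A₂ ^ k * (B₂ * B₂ᴴ) * A₂ᴴ ^ k) 1 :=
    aux_hasSum_gramian A₂ B₂ hAB₂ h₂_stable
  -- the intertwiner
  have hUsummable : Summable (fun k : ℕ => A₁ ^ k * (B₁ * B₂ᴴ) * A₂ᴴ ^ k) :=
    aux_summable_cross A₁ A₂ (B₁ * B₂ᴴ) h₁_stable h₂_stable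
  set U : Matrix (Fin n₁) (Fin n₂) ℂ := ∑' k : ℕ, A₁ ^ k * (B₁ * B₂ᴴ) * A₂ᴴ ^ k with hUdef
  have hUsum : HasSum (fun k : ℕ => A₁ ^ k * (B₁ * B₂ᴴ) * A₂ᴴ ^ k) U := hUsummable.hasSum
  have hUH : HasSum (fun k : ℕ => A₂ ^ k * (B₂ * B₁ᴴ) * A₁ᴴ ^ k) Uᴴ := by
    have h := aux_hasSum_conjTranspose hUsum
    have he : (fun k : ℕ => (A₁ ^ k * (B₁ * B₂ᴴ) * A₂ᴴ ^ k)ᴴ)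
        = (fun k : ℕ => A₂ ^ k * (B₂ * B₁ᴴ) * A₁ᴴ ^ k) := by
      funext k
      simp only [Matrix.conjTranspose_mul, Matrix.conjTranspose_pow,
        Matrix.conjTranspose_conjTranspose, Matrix.mul_assoc]
    rwa [he] at h
  -- claim 1 : U * (A₂ ^ j * B₂) = A₁ ^ j * B₁
  have claim1 : ∀ j : ℕ, U * (A₂ ^ j * B₂) = A₁ ^ j * B₁ := by
    intro j
    have h1 := aux_hasSum_mulRight hUsum (A₂ ^ j * B₂)
    have h2 := aux_hasSum_mulRight hW₁ (A₁ ^ j * B₁)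
    have he : (fun k : ℕ => A₁ ^ k * (B₁ * B₂ᴴ) * A₂ᴴ ^ k * (A₂ ^ j * B₂))
        = (fun k : ℕ => A₁ ^ k * (B₁ * B₁ᴴ) * A₁ᴴ ^ k * (A₁ ^ j * B₁)) := by
      funext k
      have e1 : A₁ ^ k * (B₁ * B₂ᴴ) * A₂ᴴ ^ k * (A₂ ^ j * B₂)
          = A₁ ^ k * B₁ * (B₂ᴴ * A₂ᴴ ^ k * A₂ ^ j * B₂) := by
        simp only [Matrix.mul_assoc]
      have e2 : A₁ ^ k * (B₁ * B₁ᴴ) * A₁ᴴ ^ k * (A₁ ^ j * B₁)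
          = A₁ ^ k * B₁ * (B₁ᴴ * A₁ᴴ ^ k * A₁ ^ j * B₁) := by
        simp only [Matrix.mul_assoc]
      rw [e1, e2, key k j]
    rw [he] at h1
    have := h1.unique h2
    rwa [Matrix.one_mul] at this
  -- claim 2 : Uᴴ * (A₁ ^ j * B₁) = A₂ ^ j * B₂
  have claim2 : ∀ j : ℕ, Uᴴ * (A₁ ^ j * B₁) = A₂ ^ j * B₂ := by
    intro j
    have h1 := aux_hasSum_mulRight hUH (A₁ ^ j * B₁)
    have h2 := aux_hasSum_mulRight hW₂ (A₂ ^ j * B₂)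
    have he : (fun k : ℕ => A₂ ^ k * (B₂ * B₁ᴴ) * A₁ᴴ ^ k * (A₁ ^ j * B₁))
        = (fun k : ℕ => A₂ ^ k * (B₂ * B₂ᴴ) * A₂ᴴ ^ k * (A₂ ^ j * B₂)) := by
      funext k
      have e1 : A₂ ^ k * (B₂ * B₁ᴴ) * A₁ᴴ ^ k * (A₁ ^ j * B₁)
          = A₂ ^ k * B₂ * (B₁ᴴ * A₁ᴴ ^ k * A₁ ^ j * B₁) := by
        simp only [Matrix.mul_assoc]
      have e2 : A₂ ^ k * (B₂ * B₂ᴴ) * A₂ᴴ ^ k * (A₂ ^ j * B₂)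
          = A₂ ^ k * B₂ * (B₂ᴴ * A₂ᴴ ^ k * A₂ ^ j * B₂) := by
        simp only [Matrix.mul_assoc]
      rw [e1, e2, key k j]
    rw [he] at h1
    have := h1.unique h2
    rwa [Matrix.one_mul] at this
  -- the five conclusions
  have hB : B₁ = U * B₂ := by
    have := claim1 0
    simp only [pow_zero, Matrix.one_mul] at this
    exact this.symm
  have hC : C₁ * U = C₂ := by
    have h1 := aux_hasSum_mulLeft hUsum C₁
    have h2 := aux_hasSum_mulLeft hW₂ C₂
    have he : (fun k : ℕ => C₁ * (A₁ ^ k * (B₁ * B₂ᴴ) * A₂ᴴ ^ k))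
        = (fun k : ℕ => C₂ * (A₂ ^ k * (B₂ * B₂ᴴ) * A₂ᴴ ^ k)) := by
      funext k
      have e1 : C₁ * (A₁ ^ k * (B₁ * B₂ᴴ) * A₂ᴴ ^ k)
          = C₁ * A₁ ^ k * B₁ * (B₂ᴴ * A₂ᴴ ^ k) := by simp only [Matrix.mul_assoc]
      have e2 : C₂ * (A₂ ^ k * (B₂ * B₂ᴴ) * A₂ᴴ ^ k)
          = C₂ * A₂ ^ k * B₂ * (B₂ᴴ * A₂ᴴ ^ k) := by simp only [Matrix.mul_assoc]
      rw [e1, e2, hCAB k]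
    rw [he] at h1
    have := h1.unique h2
    rwa [Matrix.mul_one] at this
  have hUUH : U * Uᴴ = 1 := by
    refine aux_ext_of_gramian A₁ B₁ hW₁ (U * Uᴴ) 1 fun j => ?_
    rw [Matrix.mul_assoc, claim2 j, claim1 j, Matrix.one_mul]
  have hUHU : Uᴴ * U = 1 := by
    refine aux_ext_of_gramian A₂ B₂ hW₂ (Uᴴ * U) 1 fun j => ?_
    rw [Matrix.mul_assoc, claim1 j, claim2 j, Matrix.one_mul]
  have hAU : A₁ * U = U * A₂ := by
    refine aux_ext_of_gramian A₂ B₂ hW₂ (A₁ * U) (U * A₂) fun j => ?_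
    have e1 : A₁ * U * (A₂ ^ j * B₂) = A₁ * (U * (A₂ ^ j * B₂)) := by
      simp only [Matrix.mul_assoc]
    have e2 : U * A₂ * (A₂ ^ j * B₂) = U * (A₂ ^ (j + 1) * B₂) := by
      rw [pow_succ']; simp only [Matrix.mul_assoc]
    rw [e1, e2, claim1 j, claim1 (j + 1), pow_succ']
    simp only [Matrix.mul_assoc]
  have hn : n₁ = n₂ := by
    have t1 : Matrix.trace (U * Uᴴ) = (n₁ : ℂ) := by
      rw [hUUH, Matrix.trace_one]; simp
    have t2 : Matrix.trace (Uᴴ * U) = (n₂ : ℂ) := by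
      rw [hUHU, Matrix.trace_one]; simp
    have := Matrix.trace_mul_comm U Uᴴ
    rw [t1, t2] at this
    exact_mod_cast this
  exact ⟨hn, U, hUHU, hUUH, hAU, hB, hC⟩
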